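/- Let Δ be a d-dimensional orientable pseudomanifold with nonempty boundary and s facets. Then the symmetric homology polytope P_Δ is unimodularly equivalent to the standard s-dimensional crosspolytope conv{±e_1,...,±e_s}. -/

import Mathlib

open Matrix BigOperators Pointwise

/-- An abstract simplicial complex on vertex set `Fin n`. -/
structure SC (n : ℕ) where
  faces : Finset (Finset (Fin n))
  down_closed : ∀ σ ∈ faces, ∀ τ, τ ⊆ σ → τ.Nonempty → τ ∈ faces
  face_nonempty : ∀ σ ∈ faces, σ.Nonempty

namespace SC

variable {n : ℕ}

/-- `K` is `d`-dimensional. -/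
def dimIs (K : SC n) (d : ℕ) : Prop :=
  (∀ σ ∈ K.faces, σ.card ≤ d + 1) ∧ ∃ σ ∈ K.faces, σ.card = d + 1

/-- `K` is pure of dimension `d`. -/
def pure (K : SC n) (d : ℕ) : Prop :=
  ∀ σ ∈ K.faces, ∃ τ ∈ K.faces, σ ⊆ τ ∧ τ.card = d + 1

/-- The `j`-dimensional faces of `K`. -/
abbrev fdex (K : SC n) (j : ℕ) : Type := {σ : Finset (Fin n) // σ ∈ K.faces ∧ σ.card = j + 1}

end SC

/-- Entry of the simplicial boundary matrix: for a codimension-one subface `τ ⊆ σ`,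
the sign `(-1)^k` where `k` is the position of the vertex removed from `σ`. -/
def bEntry {n : ℕ} (τ σ : Finset (Fin n)) : ℤ :=
  if τ ⊆ σ ∧ σ.card = τ.card + 1 then
    ∑ v ∈ σ \ τ, (-1 : ℤ) ^ ((σ.filter fun w => w < v).card)
  else 0

/-- The boundary matrix from `(j+1)`-dimensional faces to `j`-dimensional faces,
i.e. the boundary map `∂_{j+2}`… no: `K.B j` is the map `∂` whose columns are indexed
by the `(j+1)`-faces; in homological notation `K.B (d-1)` is `∂_d`. -/
def SC.B {n : ℕ} (K : SC n) (j : ℕ) : Matrix (K.fdex j) (K.fdex (j + 1)) ℤ :=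
  fun τ σ => bEntry τ.1 σ.1

/-- Strong connectivity of a `(j+1)`-dimensional pure complex: any two facets are
connected by a chain of facets successively sharing a ridge. -/
def SC.StronglyConnected {n : ℕ} (K : SC n) (j : ℕ) : Prop :=
  ∀ a b : K.fdex (j + 1),
    Relation.ReflTransGen (fun σ σ' : K.fdex (j + 1) => (σ.1 ∩ σ'.1).card = j + 1) a b

/-- the number of facets (of a `(j+1)`-dimensional complex) containing a given ridge -/
def SC.ridgeDeg {n : ℕ} (K : SC n) (j : ℕ) (τ : K.fdex j) : ℕ :=
  (Finset.univ.filter fun σ : K.fdex (j + 1) => τ.1 ⊆ σ.1).card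

section Poly

variable {ι κ : Type*} [Fintype ι] [Fintype κ]

def dot (x y : ι → ℝ) : ℝ := ∑ i, x i * y i

/-- the columns of `A` and their negatives, as real vectors -/
def colsPM (A : Matrix ι κ ℤ) : Set (ι → ℝ) :=
  {x | ∃ j : κ, x = (fun i => (A i j : ℝ)) ∨ x = fun i => -(A i j : ℝ)}

/-- the centrally symmetric polytope `conv [A | -A]` -/
def symPoly (A : Matrix ι κ ℤ) : Set (ι → ℝ) := convexHull ℝ (colsPM A)

def intVec (x : ι → ℝ) : Prop := ∀ i, ∃ z : ℤ, x i = (z : ℝ)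

def latticePts (P : Set (ι → ℝ)) : Set (ι → ℝ) := {x ∈ P | intVec x}

/-- a set is a lattice polytope iff it is the convex hull of its lattice points -/
def IsLatticePolytope (Q : Set (ι → ℝ)) : Prop := Q = convexHull ℝ (latticePts Q)

/-- the polar dual, taken within the linear span of `P` -/
def polarIn (P : Set (ι → ℝ)) : Set (ι → ℝ) :=
  {y | y ∈ Submodule.span ℝ P ∧ ∀ x ∈ P, dot x y ≤ 1}

/-- `P` is reflexive: its polar dual (within the affine hull of `P`) is a lattice polytope -/
def IsReflexive (P : Set (ι → ℝ)) : Prop := IsLatticePolytope (polarIn P)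

/-- every lattice point of the span of `P` is an integer combination of lattice points of `P` -/
def IsSpanning (P : Set (ι → ℝ)) : Prop :=
  ∀ x : ι → ℝ, intVec x → x ∈ Submodule.span ℝ P →
    x ∈ (Submodule.span ℤ (latticePts P) : Set (ι → ℝ))

/-- the integer decomposition property -/
def IsIDP (P : Set (ι → ℝ)) : Prop :=
  ∀ k : ℕ, ∀ x : ι → ℝ, intVec x → x ∈ (k : ℝ) • P →
    ∃ f : Fin k → (ι → ℝ), (∀ i, f i ∈ latticePts P) ∧ x = ∑ i, f i

/-- combinatorial equivalence: an inclusion-order isomorphism between the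
posets of exposed faces -/
def CombEquiv (P : Set (ι → ℝ)) (Q : Set (κ → ℝ)) : Prop :=
  Nonempty ({F : Set (ι → ℝ) // IsExposed ℝ P F} ≃o {F : Set (κ → ℝ) // IsExposed ℝ Q F})

/-- unimodular equivalence: an affine isomorphism between the affine hulls which
matches up the two polytopes and the lattice points of the affine hulls -/
def UniEquiv (P : Set (ι → ℝ)) (Q : Set (κ → ℝ)) : Prop :=
  ∃ f : (ι → ℝ) →ᵃ[ℝ] (κ → ℝ),
    Set.BijOn f (affineSpan ℝ P : Set (ι → ℝ)) (affineSpan ℝ Q : Set (κ → ℝ)) ∧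
    f '' P = Q ∧
    (∀ x ∈ (affineSpan ℝ P : Set (ι → ℝ)), intVec x → intVec (f x)) ∧
    (∀ y ∈ (affineSpan ℝ Q : Set (κ → ℝ)), intVec y →
      ∃ x ∈ (affineSpan ℝ P : Set (ι → ℝ)), intVec x ∧ f x = y)

/-- the facets of a polytope: the maximal proper exposed faces -/
def polyFacets (P : Set (ι → ℝ)) : Set (Set (ι → ℝ)) :=
  {F | IsExposed ℝ P F ∧ F ⊂ P ∧ ∀ G, IsExposed ℝ P G → F ⊆ G → G ⊂ P → G = F}

/-- independence of a set of columns of a rational matrix -/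
def colsIndep (A : Matrix ι κ ℚ) (S : Set κ) : Prop :=
  LinearIndependent ℚ (fun j : S => (fun i => A i (j : κ)))

/-- `S` is a basis of the column matroid `M[A]` -/
def IsBasisSet (A : Matrix ι κ ℚ) (S : Set κ) : Prop :=
  colsIndep A S ∧ ∀ S' : Set κ, S ⊆ S' → colsIndep A S' → S' = S

end Poly

/-- the standard cross-polytope -/
def stdCross (s : ℕ) : Set (Fin s → ℝ) :=
  convexHull ℝ {x | ∃ i : Fin s, x = Pi.single i 1 ∨ x = Pi.single i (-1)}

/-- a signed incidence matrix of the cycle on `n` vertices: column `j` is `e_{j+1} - e_j` -/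
def cycMat (n : ℕ) : Matrix (Fin n) (Fin n) ℤ :=
  fun i j => (if (i : ℕ) = ((j : ℕ) + 1) % n then 1 else 0) - (if i = j then 1 else 0)

/-- a signed incidence matrix of the facet-ridge graph of a `(j+1)`-dimensional
pseudomanifold without boundary: rows are facets, columns are ridges, and the two
facets containing a ridge receive opposite signs. -/
noncomputable def SC.frg {n : ℕ} (K : SC n) (j : ℕ) :
    Matrix (K.fdex (j + 1)) (K.fdex j) ℤ :=
  fun σ τ =>
    if τ.1 ⊆ σ.1 then
      (if ∀ σ' : K.fdex (j + 1), τ.1 ⊆ σ'.1 → σ' ≠ σ →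
          (σ'.1 \ τ.1).min ≤ (σ.1 \ τ.1).min then 1 else -1)
    else 0


section MyAux

-- auxiliary: chains witnessing reflexive-transitive closure with length
def auxChain {α : Type*} (r : α → α → Prop) (a : α) : ℕ → α → Prop
  | 0 => fun b => b = a
  | (m+1) => fun b => auxChain r a m b ∨ ∃ p, auxChain r a m p ∧ r p b

lemma auxChain_of_rtg {α : Type*} {r : α → α → Prop} {a b : α}
    (h : Relation.ReflTransGen r a b) : ∃ m, auxChain r a m b := by
  induction h with
  | refl => exact ⟨0, rfl⟩
  | tail _ hr ih =>
      obtain ⟨m, hm⟩ := ih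
      exact ⟨m + 1, Or.inr ⟨_, hm, hr⟩⟩

lemma exists_left_inverse_B (n j : ℕ) (K : SC n)
    (hsc : K.StronglyConnected j)
    (hle : ∀ τ : K.fdex j, K.ridgeDeg j τ ≤ 2)
    (hbd : ∃ τ : K.fdex j, K.ridgeDeg j τ = 1) :
    ∃ W : Matrix (K.fdex (j+1)) (K.fdex j) ℤ, W * K.B j = 1 := by
  classical
  obtain ⟨τ0, hτ0⟩ := hbd
  rw [SC.ridgeDeg] at hτ0
  obtain ⟨σ0, hσ0⟩ := Finset.card_eq_one.mp hτ0
  have hσ0mem : τ0.1 ⊆ σ0.1 := by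
    have : σ0 ∈ Finset.univ.filter fun σ : K.fdex (j+1) => τ0.1 ⊆ σ.1 := by
      rw [hσ0]; exact Finset.mem_singleton_self σ0
    exact (Finset.mem_filter.mp this).2
  have huniq : ∀ σ' : K.fdex (j+1), τ0.1 ⊆ σ'.1 → σ' = σ0 := by
    intro σ' h
    have : σ' ∈ Finset.univ.filter fun σ : K.fdex (j+1) => τ0.1 ⊆ σ.1 :=
      Finset.mem_filter.mpr ⟨Finset.mem_univ _, h⟩
    rw [hσ0] at this
    exact Finset.mem_singleton.mp this
  set A : K.fdex (j+1) → K.fdex (j+1) → Prop :=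
    fun p q => (p.1 ∩ q.1).card = j + 1 with hA
  have hex : ∀ σ : K.fdex (j+1), ∃ m, auxChain A σ0 m σ :=
    fun σ => auxChain_of_rtg (hsc σ0 σ)
  set dd : K.fdex (j+1) → ℕ := fun σ => Nat.find (hex σ) with hdd
  have hchain : ∀ σ, auxChain A σ0 (dd σ) σ := fun σ => Nat.find_spec (hex σ)
  have hmin : ∀ σ m, m < dd σ → ¬ auxChain A σ0 m σ := fun σ m h => Nat.find_min (hex σ) h
  -- choose for each facet a ridge contained in it whose other cofacet is closer to σ0
  have hτ : ∀ σ : K.fdex (j+1), ∃ τ : K.fdex j, τ.1 ⊆ σ.1 ∧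
      ∀ σ' : K.fdex (j+1), τ.1 ⊆ σ'.1 → σ' = σ ∨ dd σ' < dd σ := by
    intro σ
    by_cases hσ : σ = σ0
    · subst hσ
      exact ⟨τ0, hσ0mem, fun σ' h => Or.inl (huniq σ' h)⟩
    · have hd0 : dd σ ≠ 0 := by
        intro h
        apply hσ
        have hc := hchain σ
        rw [h] at hc
        exact hc
      obtain ⟨m, hm⟩ : ∃ m, dd σ = m + 1 :=
        ⟨dd σ - 1, (Nat.succ_pred_eq_of_pos (Nat.pos_of_ne_zero hd0)).symm⟩
      have hc := hchain σ
      rw [hm] at hc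
      rcases hc with hc | ⟨p, hp, hpA⟩
      · exact absurd hc (hmin σ m (by omega))
      · have hdp : dd p < dd σ := by
          have h1 : dd p ≤ m := Nat.find_min' (hex p) hp
          omega
        have hpσ : p ≠ σ := by
          intro h
          have hAc : (p.1 ∩ σ.1).card = j + 1 := hpA
          rw [h, Finset.inter_self] at hAc
          have := σ.2.2
          omega
        have hAcard : (p.1 ∩ σ.1).card = j + 1 := hpA
        have hface : p.1 ∩ σ.1 ∈ K.faces := by
          apply K.down_closed σ.1 σ.2.1 _ Finset.inter_subset_right
          rw [← Finset.card_pos, hAcard]; omega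
        set τ : K.fdex j := ⟨p.1 ∩ σ.1, hface, hAcard⟩ with hτdef
        refine ⟨τ, Finset.inter_subset_right, ?_⟩
        intro σ' h'
        have h2 := hle τ
        rw [SC.ridgeDeg] at h2
        set flt := Finset.univ.filter fun σ'' : K.fdex (j+1) => τ.1 ⊆ σ''.1 with hflt
        have hpmem : p ∈ flt := Finset.mem_filter.mpr ⟨Finset.mem_univ _, Finset.inter_subset_left⟩
        have hσmem : σ ∈ flt := Finset.mem_filter.mpr ⟨Finset.mem_univ _, Finset.inter_subset_right⟩
        have hσ'mem : σ' ∈ flt := Finset.mem_filter.mpr ⟨Finset.mem_univ _, h'⟩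
        have : σ' = σ ∨ σ' = p := by
          by_contra hcon
          push_neg at hcon
          have hsub : ({σ', p, σ} : Finset (K.fdex (j+1))) ⊆ flt := by
            intro x hx
            simp only [Finset.mem_insert, Finset.mem_singleton] at hx
            rcases hx with rfl | rfl | rfl
            · exact hσ'mem
            · exact hpmem
            · exact hσmem
          have hc3 : ({σ', p, σ} : Finset (K.fdex (j+1))).card = 3 :=
            Finset.card_eq_three.mpr ⟨σ', p, σ, hcon.2, hcon.1, hpσ, rfl⟩
          have := Finset.card_le_card hsub
          omega
        rcases this with rfl | rfl
        · exact Or.inl rfl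
        · exact Or.inr hdp
  choose tau hsub hlt using hτ
  -- the square matrix whose rows are the chosen ridge rows
  set M : Matrix (K.fdex (j+1)) (K.fdex (j+1)) ℤ :=
    fun σ σ' => K.B j (tau σ) σ' with hM
  have hdiag : ∀ σ, ∃ k : ℕ, M σ σ = (-1) ^ k := by
    intro σ
    have hcond : (tau σ).1 ⊆ σ.1 ∧ σ.1.card = (tau σ).1.card + 1 := by
      refine ⟨hsub σ, ?_⟩
      rw [σ.2.2, (tau σ).2.2]
    have hcard1 : (σ.1 \ (tau σ).1).card = 1 := by
      rw [Finset.card_sdiff_of_subset (hsub σ), σ.2.2, (tau σ).2.2]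
      omega
    obtain ⟨v, hv⟩ := Finset.card_eq_one.mp hcard1
    refine ⟨(σ.1.filter fun w => w < v).card, ?_⟩
    rw [hM]
    simp only
    rw [SC.B, bEntry, if_pos hcond, hv, Finset.sum_singleton]
  have hoff : ∀ σ σ', M σ σ' ≠ 0 → σ' = σ ∨ dd σ' < dd σ := by
    intro σ σ' h
    apply hlt
    by_contra hns
    apply h
    rw [hM]
    simp only
    rw [SC.B, bEntry, if_neg]
    exact fun hcc => hns hcc.1
  -- a strict weighting
  set N0 := Fintype.card (K.fdex (j+1)) with hN0
  have hN0pos : 0 < N0 := Fintype.card_pos_iff.mpr ⟨σ0⟩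
  set g : K.fdex (j+1) → ℕ := fun σ => ((Fintype.equivFin (K.fdex (j+1))) σ : ℕ) with hg
  have hglt : ∀ σ, g σ < N0 := fun σ => (Fintype.equivFin (K.fdex (j+1)) σ).2
  have hginj : Function.Injective g := fun x y h =>
    (Fintype.equivFin (K.fdex (j+1))).injective (Fin.val_injective h)
  set bfun : K.fdex (j+1) → ℕ := fun σ => dd σ * N0 + g σ with hbfun
  have hbinj : Function.Injective bfun := by
    intro x y h
    apply hginj
    have h' : (dd x * N0 + g x) % N0 = (dd y * N0 + g y) % N0 := congrArg (· % N0) h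
    rwa [Nat.add_comm (dd x * N0), Nat.add_comm (dd y * N0), Nat.add_mul_mod_self_right,
      Nat.add_mul_mod_self_right, Nat.mod_eq_of_lt (hglt x), Nat.mod_eq_of_lt (hglt y)] at h'
  have hb : ∀ σ σ', σ' ≠ σ → M σ σ' ≠ 0 → bfun σ' < bfun σ := by
    intro σ σ' hne h
    have hd : dd σ' < dd σ := (hoff σ σ' h).resolve_left hne
    calc bfun σ' < (dd σ' + 1) * N0 := by
          rw [hbfun]; simp only
          rw [Nat.succ_mul]
          exact Nat.add_lt_add_left (hglt σ') _
      _ ≤ dd σ * N0 := Nat.mul_le_mul_right N0 hd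
      _ ≤ bfun σ := Nat.le_add_right _ _
  -- sort the facets by the weighting
  set e0 := Fintype.equivFin (K.fdex (j+1)) with he0
  set v : Fin N0 → ℕ := fun i => bfun (e0.symm i) with hv
  set q : Fin N0 ≃ K.fdex (j+1) := (Tuple.sort v).trans e0.symm with hq
  have hqmono : Monotone (fun i => bfun (q i)) := by
    have := Tuple.monotone_sort v
    intro a c hac
    exact this hac
  have htri : (M.submatrix q q).BlockTriangular OrderDual.toDual := by
    intro i k hik
    have hik' : i < k := hik
    by_contra h
    have hne : q k ≠ q i := fun hc => hik'.ne' (q.injective hc)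
    have hbb : bfun (q k) < bfun (q i) := hb (q i) (q k) hne h
    have hmono : bfun (q i) ≤ bfun (q k) := hqmono (le_of_lt hik')
    omega
  have hdet : IsUnit (M.det) := by
    rw [← Matrix.det_submatrix_equiv_self q M]
    rw [Matrix.det_of_lowerTriangular _ htri]
    choose k hk using hdiag
    have : ∀ i : Fin N0, (M.submatrix q q) i i = (-1 : ℤ) ^ (k (q i)) := by
      intro i; exact hk (q i)
    rw [Finset.prod_congr rfl fun i _ => this i, Finset.prod_pow_eq_pow_sum]
    exact (isUnit_one.neg).pow _
  letI := M.invertibleOfIsUnitDet hdet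
  set Nsel : Matrix (K.fdex (j+1)) (K.fdex j) ℤ :=
    fun σ τ => if τ = tau σ then 1 else 0 with hNsel
  have hNB : Nsel * K.B j = M := by
    ext σ σ'
    rw [Matrix.mul_apply, hM]
    simp only [hNsel, ite_mul, one_mul, zero_mul]
    rw [Finset.sum_ite_eq' Finset.univ (tau σ) (fun τ => K.B j τ σ')]
    simp
  refine ⟨⅟M * Nsel, ?_⟩
  rw [Matrix.mul_assoc, hNB, invOf_mul_self]

section AuxUE

variable {ι κ : Type*} [Fintype ι] [Fintype κ] [DecidableEq ι] [DecidableEq κ]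

lemma aux_single_smul {s : ℕ} (i : Fin s) (c : ℝ) :
    c • (Pi.single i (1:ℝ) : Fin s → ℝ) = (Pi.single i c : Fin s → ℝ) := by
  funext k; by_cases h : k = i <;> simp [Pi.single_apply, h]

lemma uniEquiv_of_left_inverse {s : ℕ} (B : Matrix ι κ ℤ) (W : Matrix κ ι ℤ)
    (hWB : W * B = 1) (eF : Fin s ≃ κ) [Nonempty κ] :
    UniEquiv (symPoly B) (stdCross s) := by
  classical
  set C : κ → (ι → ℝ) := fun σ τ => (B τ σ : ℝ) with hC
  set Wr : Matrix (Fin s) ι ℝ := fun i τ => (W (eF i) τ : ℝ) with hWr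
  set L : (ι → ℝ) →ₗ[ℝ] (Fin s → ℝ) := Wr.mulVecLin with hL
  have hLapp : ∀ (x : ι → ℝ) (i : Fin s), L x i = ∑ τ, (W (eF i) τ : ℝ) * x τ := by
    intro x i
    simp [hL, hWr, Matrix.mulVecLin_apply, Matrix.mulVec, dotProduct]
    rfl
  have key : ∀ σ, L (C σ) = Pi.single (eF.symm σ) 1 := by
    intro σ; funext i
    have h1 : (W * B) (eF i) σ = if eF i = σ then 1 else 0 := by
      rw [hWB, Matrix.one_apply]
    have h2 : ∑ τ, (W (eF i) τ : ℝ) * (C σ τ) = (((W * B) (eF i) σ : ℤ) : ℝ) := by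
      rw [Matrix.mul_apply]; push_cast; rfl
    rw [hLapp, h2, h1, Pi.single_apply]
    by_cases h : eF i = σ
    · simp [h, (Equiv.symm_apply_eq eF).mpr h.symm, eq_comm]
    · have h' : ¬ (i = eF.symm σ) := fun hh => h (by rw [hh, Equiv.apply_symm_apply])
      simp [h, h']
  -- basic memberships
  have hCmem : ∀ σ, C σ ∈ colsPM B := fun σ => ⟨σ, Or.inl rfl⟩
  have hCnegmem : ∀ σ, -C σ ∈ colsPM B := by
    intro σ; exact ⟨σ, Or.inr (by funext τ; simp [hC])⟩
  have hCP : ∀ σ, C σ ∈ symPoly B := fun σ => subset_convexHull ℝ _ (hCmem σ)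
  have hCnegP : ∀ σ, -C σ ∈ symPoly B := fun σ => subset_convexHull ℝ _ (hCnegmem σ)
  obtain ⟨σ1⟩ := (inferInstance : Nonempty κ)
  have h0P : (0 : ι → ℝ) ∈ symPoly B := by
    have h := (convex_convexHull ℝ (colsPM B)) (hCP σ1) (hCnegP σ1)
      (by norm_num : (0:ℝ) ≤ 1/2) (by norm_num : (0:ℝ) ≤ 1/2) (by norm_num)
    rw [smul_neg] at h
    rwa [add_neg_cancel] at h
  have hsingQ : ∀ i : Fin s, (Pi.single i 1 : Fin s → ℝ) ∈ stdCross s :=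
    fun i => subset_convexHull ℝ _ ⟨i, Or.inl rfl⟩
  have hsingQ' : ∀ i : Fin s, (Pi.single i (-1) : Fin s → ℝ) ∈ stdCross s :=
    fun i => subset_convexHull ℝ _ ⟨i, Or.inr rfl⟩
  have hsingneg : ∀ i : Fin s, (Pi.single i (-1) : Fin s → ℝ) = - Pi.single i 1 := by
    intro i; funext k; by_cases h : k = i <;> simp [Pi.single_apply, h]
  have h0Q : (0 : Fin s → ℝ) ∈ stdCross s := by
    have h := (convex_convexHull ℝ _) (hsingQ (eF.symm σ1)) (hsingQ' (eF.symm σ1))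
      (by norm_num : (0:ℝ) ≤ 1/2) (by norm_num : (0:ℝ) ≤ 1/2) (by norm_num)
    rw [hsingneg, smul_neg] at h
    rwa [add_neg_cancel] at h
  -- spans
  set V : Submodule ℝ (ι → ℝ) := Submodule.span ℝ (Set.range C) with hV
  have hSV : colsPM B ⊆ (V : Set (ι → ℝ)) := by
    rintro x ⟨σ, (rfl | rfl)⟩
    · exact Submodule.subset_span ⟨σ, rfl⟩
    · have : (fun i => -(B i σ : ℝ)) = -C σ := by funext τ; simp [hC]
      rw [this]; exact neg_mem (Submodule.subset_span ⟨σ, rfl⟩)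
  have hPV : symPoly B ⊆ (V : Set (ι → ℝ)) := convexHull_min hSV V.convex
  have hspanP : (affineSpan ℝ (symPoly B) : Set (ι → ℝ)) = (V : Set (ι → ℝ)) := by
    apply Set.Subset.antisymm
    · have hle : affineSpan ℝ (symPoly B) ≤ V.toAffineSubspace := by
        rw [affineSpan_le]; exact hPV
      exact fun x hx => hle hx
    · intro x hx
      have hVd : V ≤ (affineSpan ℝ (symPoly B)).direction := by
        rw [direction_affineSpan]
        refine Submodule.span_le.mpr ?_
        rintro _ ⟨σ, rfl⟩
        have hv : C σ = C σ -ᵥ (0 : ι → ℝ) := by simp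
        rw [hv]
        exact Submodule.subset_span (Set.vsub_mem_vsub (hCP σ) h0P)
      have := AffineSubspace.vadd_mem_of_mem_direction (hVd hx)
        (mem_affineSpan ℝ h0P)
      simpa using this
  have hspanQ : (affineSpan ℝ (stdCross s) : Set (Fin s → ℝ)) = Set.univ := by
    apply Set.eq_univ_of_forall
    intro y
    have hVd : ∀ i : Fin s, (Pi.single i 1 : Fin s → ℝ) ∈ (affineSpan ℝ (stdCross s)).direction := by
      intro i
      rw [direction_affineSpan]
      have hv : (Pi.single i 1 : Fin s → ℝ) = Pi.single i 1 -ᵥ (0 : Fin s → ℝ) := by simp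
      rw [hv]
      exact Submodule.subset_span (Set.vsub_mem_vsub (hsingQ i) h0Q)
    have hy : y ∈ (affineSpan ℝ (stdCross s)).direction := by
      have : y = ∑ i, y i • (Pi.single i 1 : Fin s → ℝ) := by
        conv_lhs => rw [← Finset.univ_sum_single y]
        exact Finset.sum_congr rfl fun i _ => (aux_single_smul i (y i)).symm
      rw [this]
      exact Submodule.sum_mem _ fun i _ => Submodule.smul_mem _ _ (hVd i)
    have := AffineSubspace.vadd_mem_of_mem_direction hy (mem_affineSpan ℝ h0Q)
    simpa using this
  -- image of the polytope
  have himgS : L '' (colsPM B) =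
      {x : Fin s → ℝ | ∃ i : Fin s, x = Pi.single i 1 ∨ x = Pi.single i (-1)} := by
    ext x; constructor
    · rintro ⟨y, ⟨σ, (rfl | rfl)⟩, rfl⟩
      · refine ⟨eF.symm σ, Or.inl ?_⟩
        have hcc : (fun i => (B i σ : ℝ)) = C σ := rfl
        rw [hcc, key]
      · refine ⟨eF.symm σ, Or.inr ?_⟩
        have : (fun i => -(B i σ : ℝ)) = -C σ := by funext τ; simp [hC]
        rw [this, map_neg, key, hsingneg]
    · rintro ⟨i, (rfl | rfl)⟩
      · exact ⟨C (eF i), hCmem (eF i), by rw [key, Equiv.symm_apply_apply]⟩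
      · refine ⟨-C (eF i), hCnegmem (eF i), ?_⟩
        rw [map_neg, key, Equiv.symm_apply_apply, hsingneg]
  have himgP : L '' (symPoly B) = stdCross s := by
    rw [symPoly, L.image_convexHull, himgS]; rfl
  -- injectivity on V
  have hker : ∀ x ∈ V, L x = 0 → x = 0 := by
    intro x hx hLx
    rw [hV, Submodule.mem_span_range_iff_exists_fun] at hx
    obtain ⟨a, ha⟩ := hx
    have hLxv : L x = fun i => a (eF i) := by
      funext i
      rw [← ha, map_sum]
      simp_rw [_root_.map_smul, key]
      rw [Finset.sum_apply]
      have : ∀ σ, (a σ • (Pi.single (eF.symm σ) 1 : Fin s → ℝ)) i = if eF i = σ then a σ else 0 := by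
        intro σ
        rw [Pi.smul_apply, Pi.single_apply]
        by_cases h : eF i = σ
        · simp [h, (Equiv.symm_apply_eq eF).mpr h.symm, eq_comm]
        · have h' : ¬ (i = eF.symm σ) := fun hh => h (by rw [hh, Equiv.apply_symm_apply])
          simp [h, h']
      simp_rw [this]
      rw [Finset.sum_ite_eq Finset.univ (eF i) a]
      simp
    have haz : ∀ σ, a σ = 0 := by
      intro σ
      have := congrFun hLx (eF.symm σ)
      rw [hLxv] at this
      simpa [Equiv.apply_symm_apply] using this
    rw [← ha]
    simp [haz]
  have hinj : Set.InjOn L (V : Set (ι → ℝ)) := by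
    intro x hx y hy hxy
    have hsub : x - y ∈ V := sub_mem hx hy
    have := hker _ hsub (by rw [map_sub, hxy, sub_self])
    exact sub_eq_zero.mp this
  -- surjectivity onto univ
  have hsurj : ∀ y : Fin s → ℝ, ∃ x ∈ (V : Set (ι → ℝ)), L x = y := by
    intro y
    refine ⟨∑ i, y i • C (eF i), ?_, ?_⟩
    · exact Submodule.sum_mem _ fun i _ =>
        Submodule.smul_mem _ _ (Submodule.subset_span ⟨eF i, rfl⟩)
    · rw [map_sum]
      simp_rw [_root_.map_smul, key, Equiv.symm_apply_apply, aux_single_smul]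
      exact Finset.univ_sum_single y
  refine ⟨L.toAffineMap, ?_, ?_, ?_, ?_⟩
  · rw [LinearMap.coe_toAffineMap, hspanP, hspanQ]
    refine ⟨fun x _ => trivial, hinj, fun y _ => ?_⟩
    obtain ⟨x, hx, hLx⟩ := hsurj y
    exact ⟨x, hx, hLx⟩
  · rw [LinearMap.coe_toAffineMap, himgP]
  · intro x _ hx
    intro i
    choose z hz using hx
    refine ⟨∑ τ, W (eF i) τ * z τ, ?_⟩
    rw [LinearMap.coe_toAffineMap, hLapp]
    push_cast
    exact Finset.sum_congr rfl fun τ _ => by rw [hz]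
  · intro y _ hy
    choose z hz using hy
    refine ⟨∑ i, (z i : ℝ) • C (eF i), ?_, ?_, ?_⟩
    · rw [hspanP]
      exact Submodule.sum_mem _ fun i _ =>
        Submodule.smul_mem _ _ (Submodule.subset_span ⟨eF i, rfl⟩)
    · intro τ
      refine ⟨∑ i, z i * B τ (eF i), ?_⟩
      rw [Finset.sum_apply]
      have hterm : ∀ i' : Fin s, ((z i' : ℝ) • C (eF i')) τ = ((z i' * B τ (eF i') : ℤ) : ℝ) := by
        intro i'; rw [Pi.smul_apply]; push_cast; rfl
      rw [Finset.sum_congr rfl fun i' _ => hterm i']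
      rw [Int.cast_sum]
    · rw [LinearMap.coe_toAffineMap, map_sum]
      simp_rw [_root_.map_smul, key, Equiv.symm_apply_apply]
      funext i
      rw [Finset.sum_apply]
      have : ∀ i', ((z i' : ℝ) • (Pi.single i' 1 : Fin s → ℝ)) i = if i = i' then (z i' : ℝ) else 0 := by
        intro i'
        rw [aux_single_smul, Pi.single_apply]
      simp_rw [this]
      rw [Finset.sum_ite_eq Finset.univ i (fun i' => (z i' : ℝ))]
      simp [hz]

end AuxUE

end MyAux

/-- Let `Δ` be a `d`-dimensional (`d = j+1 ≥ 1`) orientable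
pseudomanifold with nonempty boundary and `s` facets; orientability means that the
kernel of the relative boundary map (the rows of `∂_d` indexed by interior ridges)
is infinite cyclic. Then `P_Δ` is unimodularly equivalent to the standard
`s`-dimensional crosspolytope. -/
theorem stmt18 (n j s : ℕ) (K : SC n) (hdim : K.dimIs (j + 1)) (hpure : K.pure (j + 1))
    (hsc : K.StronglyConnected j)
    (hle : ∀ τ : K.fdex j, K.ridgeDeg j τ ≤ 2)
    (hbd : ∃ τ : K.fdex j, K.ridgeDeg j τ = 1)
    (horient : ∃ z : K.fdex (j + 1) → ℤ, z ≠ 0 ∧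
      (∀ τ : {τ : K.fdex j // K.ridgeDeg j τ = 2},
        ∑ σ : K.fdex (j + 1), (K.B j) τ.1 σ * z σ = 0) ∧
      ∀ w : K.fdex (j + 1) → ℤ,
        (∀ τ : {τ : K.fdex j // K.ridgeDeg j τ = 2},
          ∑ σ : K.fdex (j + 1), (K.B j) τ.1 σ * w σ = 0) →
        ∃ c : ℤ, w = c • z)
    (hs : Fintype.card (K.fdex (j + 1)) = s) :
    UniEquiv (symPoly (K.B j)) (stdCross s) := by
  obtain ⟨W, hW⟩ := exists_left_inverse_B n j K hsc hle hbd
  haveI : Nonempty (K.fdex (j + 1)) := by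
    obtain ⟨σ, hσ, hcard⟩ := hdim.2
    exact ⟨⟨σ, hσ, hcard⟩⟩
  exact uniEquiv_of_left_inverse (K.B j) W hW (Fintype.equivFinOfCardEq hs).symm
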